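/- arXiv:2408.15360 — 2 statements merged into one kernel-verified Lean document; each statement's English description precedes it below -/
import Mathlib

section
/- Let d be an odd positive integer and α an integer with gcd(α, d) = 1. Then the number of pairs (b₁, b₂) of residues modulo d with b₁² + α·b₂² ≡ 0 (mod d) is O_ε(d^{1+ε}) for every ε > 0. -/
open Finset Real

-- key scalar inequality: k+1 ≤ M * 2^(kδ) with M = 1/(δ log 2)+1
lemma key1 (δ : ℝ) (hδ : 0 < δ) (k : ℕ) :
    (k + 1 : ℝ) ≤ (1 / (δ * Real.log 2) + 1) * (2 : ℝ) ^ ((k : ℝ) * δ) := by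
  have hlog : 0 < Real.log 2 := Real.log_pos (by norm_num)
  have h2 : (2 : ℝ) ^ ((k : ℝ) * δ) = Real.exp ((k : ℝ) * δ * Real.log 2) := by
    rw [Real.rpow_def_of_pos (by norm_num)]; ring_nf
  have hx : (0 : ℝ) ≤ (k : ℝ) * δ * Real.log 2 := by positivity
  have he1 : (1 : ℝ) ≤ (2 : ℝ) ^ ((k : ℝ) * δ) := by
    rw [h2]; exact Real.one_le_exp hx
  have he2 : (k : ℝ) * δ * Real.log 2 ≤ (2 : ℝ) ^ ((k : ℝ) * δ) := by
    rw [h2]; linarith [Real.add_one_le_exp ((k : ℝ) * δ * Real.log 2)]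
  have hpos : 0 < δ * Real.log 2 := by positivity
  have : (k : ℝ) ≤ (1 / (δ * Real.log 2)) * (2 : ℝ) ^ ((k : ℝ) * δ) := by
    rw [div_mul_eq_mul_div, le_div_iff₀ hpos]
    calc (k : ℝ) * (δ * Real.log 2) = (k : ℝ) * δ * Real.log 2 := by ring
    _ ≤ (2 : ℝ) ^ ((k : ℝ) * δ) := he2
    _ = 1 * (2 : ℝ) ^ ((k : ℝ) * δ) := by ring
  nlinarith

lemma tau_bound (δ : ℝ) (hδ : 0 < δ) : ∃ C : ℝ, 1 ≤ C ∧ ∀ d : ℕ, 0 < d →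
    (d.divisors.card : ℝ) ≤ C * (d : ℝ) ^ δ := by
  set M : ℝ := 1 / (δ * Real.log 2) + 1 with hM
  have hlog : 0 < Real.log 2 := Real.log_pos (by norm_num)
  have hM1 : 1 ≤ M := by
    have h : 0 < 1 / (δ * Real.log 2) := by positivity
    rw [hM]; linarith
  set P : ℕ := ⌈(2 : ℝ) ^ (1 / δ)⌉₊ with hP
  refine ⟨M ^ P, one_le_pow₀ hM1, ?_⟩
  intro d hd
  have hd0 : (d : ℕ) ≠ 0 := hd.ne'
  rw [Nat.card_divisors hd0]
  -- cast the product
  have hcast : ((d.primeFactors.prod fun p => d.factorization p + 1 : ℕ) : ℝ)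
      = ∏ p ∈ d.primeFactors, ((d.factorization p : ℝ) + 1) := by
    push_cast [Finset.prod_natCast]; rfl
  rw [hcast]
  -- termwise bound
  have hterm : ∀ p ∈ d.primeFactors,
      (d.factorization p : ℝ) + 1 ≤
        (if (2:ℝ) ≤ (p:ℝ) ^ δ then 1 else M) * (p : ℝ) ^ ((d.factorization p : ℝ) * δ) := by
    intro p hp
    have hpp : p.Prime := Nat.prime_of_mem_primeFactors hp
    have hp2 : (2 : ℝ) ≤ (p : ℝ) := by exact_mod_cast hpp.two_le
    have hp0 : (0 : ℝ) ≤ (p : ℝ) := by positivity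
    set k := d.factorization p
    by_cases hbig : (2:ℝ) ≤ (p:ℝ) ^ δ
    · rw [if_pos hbig, one_mul]
      have h1 : (k + 1 : ℝ) ≤ (2 : ℝ) ^ (k : ℕ) := by
        have := Nat.lt_two_pow_self (n := k)
        exact_mod_cast this
      have h2 : ((2 : ℝ) ^ (k:ℕ) : ℝ) ≤ ((p:ℝ) ^ δ) ^ (k:ℕ) := by
        exact pow_le_pow_left₀ (by norm_num) hbig k
      have h3 : ((p:ℝ) ^ δ) ^ (k:ℕ) = (p : ℝ) ^ ((k : ℝ) * δ) := by
        rw [← Real.rpow_natCast ((p:ℝ) ^ δ) k, ← Real.rpow_mul hp0, mul_comm]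
      calc (k : ℝ) + 1 ≤ (2 : ℝ) ^ (k:ℕ) := h1
      _ ≤ ((p:ℝ) ^ δ) ^ (k:ℕ) := h2
      _ = (p : ℝ) ^ ((k : ℝ) * δ) := h3
    · rw [if_neg hbig]
      calc (k : ℝ) + 1 ≤ M * (2 : ℝ) ^ ((k : ℝ) * δ) := key1 δ hδ k
      _ ≤ M * (p : ℝ) ^ ((k : ℝ) * δ) := by
          have h4 : (2:ℝ) ^ ((k:ℝ)*δ) ≤ (p:ℝ) ^ ((k:ℝ)*δ) :=
            Real.rpow_le_rpow (by norm_num) hp2 (by positivity)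
          exact mul_le_mul_of_nonneg_left h4 (by linarith)
  have h1 := Finset.prod_le_prod (s := d.primeFactors)
    (f := fun p => (d.factorization p : ℝ) + 1)
    (g := fun p => (if (2:ℝ) ≤ (p:ℝ) ^ δ then 1 else M) * (p : ℝ) ^ ((d.factorization p : ℝ) * δ))
    (fun p _ => by positivity) hterm
  have h2 : ∏ p ∈ d.primeFactors,
      ((if (2:ℝ) ≤ (p:ℝ) ^ δ then 1 else M) * (p : ℝ) ^ ((d.factorization p : ℝ) * δ))
      = (∏ p ∈ d.primeFactors, (if (2:ℝ) ≤ (p:ℝ) ^ δ then 1 else M))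
        * ∏ p ∈ d.primeFactors, (p : ℝ) ^ ((d.factorization p : ℝ) * δ) :=
    Finset.prod_mul_distrib
  have h3 : (∏ p ∈ d.primeFactors, (if (2:ℝ) ≤ (p:ℝ) ^ δ then 1 else M)) ≤ M ^ P := by
    rw [Finset.prod_ite, Finset.prod_const, Finset.prod_const, one_pow, one_mul]
    have hsub : (d.primeFactors.filter fun p : ℕ => ¬ (2:ℝ) ≤ (p:ℝ) ^ δ) ⊆ Finset.range P := by
      intro p hp
      rw [Finset.mem_filter] at hp
      rw [Finset.mem_range]
      have hlt : (p:ℝ) ^ δ < 2 := not_le.mp hp.2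
      have hp0 : (0:ℝ) ≤ (p:ℝ) := Nat.cast_nonneg p
      have : ((p:ℝ) ^ δ) ^ (1/δ) < (2:ℝ) ^ (1/δ) :=
        Real.rpow_lt_rpow (by positivity) hlt (by positivity)
      rw [← Real.rpow_mul hp0, mul_one_div, div_self hδ.ne', Real.rpow_one] at this
      have hle : (2:ℝ) ^ (1/δ) ≤ (P : ℝ) := Nat.le_ceil _
      exact_mod_cast lt_of_lt_of_le this hle
    calc M ^ (d.primeFactors.filter fun p : ℕ => ¬ (2:ℝ) ≤ (p:ℝ) ^ δ).card
        ≤ M ^ (Finset.range P).card := pow_le_pow_right₀ hM1 (Finset.card_le_card hsub)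
      _ = M ^ P := by rw [Finset.card_range]
  have h4 : (∏ p ∈ d.primeFactors, (p : ℝ) ^ ((d.factorization p : ℝ) * δ)) = (d : ℝ) ^ δ := by
    have : ∀ p ∈ d.primeFactors, (p : ℝ) ^ ((d.factorization p : ℝ) * δ)
        = ((p ^ d.factorization p : ℕ) : ℝ) ^ δ := by
      intro p hp
      rw [Real.rpow_mul (Nat.cast_nonneg p), Real.rpow_natCast]
      push_cast
      ring
    rw [Finset.prod_congr rfl this,
      Real.finset_prod_rpow _ _ (fun p _ => by positivity) δ]
    congr 1
    rw [← Nat.cast_prod]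
    congr 1
    conv_rhs => rw [← Nat.factorization_prod_pow_eq_self hd0]
    rw [Nat.prod_factorization_eq_prod_primeFactors]
  have hdd : (0:ℝ) ≤ (d:ℝ) ^ δ := by positivity
  calc (∏ p ∈ d.primeFactors, ((d.factorization p : ℝ) + 1)) ≤ _ := h1
    _ = _ * _ := h2
    _ ≤ M ^ P * (d : ℝ) ^ δ := by rw [h4]; exact mul_le_mul_of_nonneg_right h3 hdd

-- in ZMod p^k (p odd prime), a unit square has at most two square roots
lemma sq_cases {p : ℕ} (hp : p.Prime) (hodd : p ≠ 2) (k : ℕ) {t s : ZMod (p ^ k)}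
    (hs : IsUnit s) (h : t ^ 2 = s ^ 2) : t = s ∨ t = -s := by
  rcases Nat.eq_zero_or_pos k with hk | hk
  · subst hk
    left
    haveI : Subsingleton (ZMod (p ^ 0)) := by rw [pow_zero]; infer_instance
    exact Subsingleton.elim t s
  haveI : NeZero (p ^ k) := ⟨pow_ne_zero _ hp.pos.ne'⟩
  have hpn : p ∣ p ^ k := dvd_pow_self p hk.ne'
  have hdvd : ((p : ℤ)) ^ k ∣ ((t.val : ℤ) - s.val) * ((t.val : ℤ) + s.val) := by
    have : ((↑(p ^ k) : ℤ)) ∣ ((t.val : ℤ) - s.val) * ((t.val : ℤ) + s.val) := by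
      rw [← ZMod.intCast_zmod_eq_zero_iff_dvd]
      push_cast [ZMod.natCast_val, ZMod.cast_id]
      linear_combination h
    exact_mod_cast this
  have hc : Nat.Coprime s.val (p ^ k) := by
    rw [← ZMod.isUnit_iff_coprime, ZMod.natCast_val, ZMod.cast_id]
    exact hs
  have hps : ¬ (p : ℤ) ∣ (s.val : ℤ) := by
    intro hdvd'
    have h1 : (p : ℕ) ∣ s.val := Int.ofNat_dvd.mp hdvd'
    have h2 : p ∣ 1 := hc ▸ Nat.dvd_gcd h1 hpn
    exact hp.one_lt.ne' (Nat.dvd_one.mp h2)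
  have hprime : Prime (p : ℤ) := Nat.prime_iff_prime_int.mp hp
  have conv1 : (((t.val : ℤ) - s.val : ℤ) : ZMod (p ^ k)) = t - s := by
    push_cast [ZMod.natCast_val, ZMod.cast_id]
    rfl
  have conv2 : (((t.val : ℤ) + s.val : ℤ) : ZMod (p ^ k)) = t + s := by
    push_cast [ZMod.natCast_val, ZMod.cast_id]
    rfl
  by_cases hcase : (p : ℤ) ∣ ((t.val : ℤ) + s.val)
  · right
    have hnd : ¬ (p : ℤ) ∣ ((t.val : ℤ) - s.val) := by
      intro hd
      have h2S : (p : ℤ) ∣ 2 * (s.val : ℤ) := by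
        have : (2 : ℤ) * (s.val : ℤ) = ((t.val : ℤ) + s.val) - ((t.val : ℤ) - s.val) := by ring
        rw [this]
        exact dvd_sub hcase hd
      rcases hprime.dvd_mul.mp h2S with h2 | hS
      · have hp2 : p ∣ 2 := by exact_mod_cast h2
        exact hodd ((Nat.prime_dvd_prime_iff_eq hp Nat.prime_two).mp hp2)
      · exact hps hS
    have hcop : IsCoprime ((p : ℤ) ^ k) ((t.val : ℤ) - s.val) :=
      ((hprime.coprime_iff_not_dvd).mpr hnd).pow_left
    have hd : ((p : ℤ)) ^ k ∣ ((t.val : ℤ) + s.val) := hcop.dvd_of_dvd_mul_left hdvd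
    have h0 : (((t.val : ℤ) + s.val : ℤ) : ZMod (p ^ k)) = 0 := by
      rw [ZMod.intCast_zmod_eq_zero_iff_dvd]
      exact_mod_cast hd
    rw [conv2] at h0
    exact eq_neg_of_add_eq_zero_left h0
  · left
    have hcop : IsCoprime ((p : ℤ) ^ k) ((t.val : ℤ) + s.val) :=
      ((hprime.coprime_iff_not_dvd).mpr hcase).pow_left
    have hd : ((p : ℤ)) ^ k ∣ ((t.val : ℤ) - s.val) := hcop.dvd_of_dvd_mul_right hdvd
    have : (((t.val : ℤ) - s.val : ℤ) : ZMod (p ^ k)) = 0 := by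
      rw [ZMod.intCast_zmod_eq_zero_iff_dvd]
      exact_mod_cast hd
    rw [conv1] at this
    exact sub_eq_zero.mp this

lemma isUnit_intCast_of_gcd {c : ℤ} {m : ℕ} (h : Int.gcd c m = 1) : IsUnit ((c : ℤ) : ZMod m) := by
  obtain ⟨u, v, huv⟩ := Int.isCoprime_iff_gcd_eq_one.mpr h
  have : ((u * c + v * m : ℤ) : ZMod m) = 1 := by rw [huv]; norm_num
  push_cast at this
  rw [ZMod.natCast_self, mul_zero, add_zero] at this
  exact IsUnit.of_mul_eq_one _ (by rw [mul_comm] at this; exact this)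

noncomputable def Rcard (m : ℕ) (c : ℤ) : ℕ := Nat.card {t : ZMod m // t ^ 2 = (c : ZMod m)}

lemma Rcard_pp {p : ℕ} (hp : p.Prime) (hodd : p ≠ 2) (k : ℕ) {c : ℤ}
    (hc : Int.gcd c ((p ^ k : ℕ) : ℤ) = 1) : Rcard (p ^ k) c ≤ 2 := by
  haveI : NeZero (p ^ k) := ⟨pow_ne_zero _ hp.pos.ne'⟩
  by_cases hex : ∃ s : ZMod (p ^ k), s ^ 2 = (c : ZMod (p ^ k))
  · obtain ⟨s, hsq⟩ := hex
    have hunit : IsUnit s := by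
      have : IsUnit (s ^ 2) := hsq ▸ isUnit_intCast_of_gcd hc
      exact (isUnit_pow_iff (two_ne_zero)).mp this
    have hinj : Function.Injective
        (fun t : {t : ZMod (p ^ k) // t ^ 2 = (c : ZMod (p ^ k))} => (decide (t.1 = s))) := by
      intro a b hab
      have hab' : (a.1 = s) ↔ (b.1 = s) := decide_eq_decide.mp hab
      have ha : a.1 = s ∨ a.1 = -s := sq_cases hp hodd k hunit (by rw [a.2, hsq])
      have hb : b.1 = s ∨ b.1 = -s := sq_cases hp hodd k hunit (by rw [b.2, hsq])
      apply Subtype.ext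
      rcases ha with ha | ha
      · rw [ha, (hab'.mp ha).symm]
      · rcases hb with hb | hb
        · have h5 : a.1 = s := by rw [hb] at hab'; exact hab'.mpr rfl
          rw [h5, hb]
        · rw [ha, hb]
    calc Rcard (p ^ k) c ≤ Nat.card Bool := Nat.card_le_card_of_injective _ hinj
      _ = 2 := by simp
  · have : IsEmpty {t : ZMod (p ^ k) // t ^ 2 = (c : ZMod (p ^ k))} := by
      constructor
      intro t
      exact hex ⟨t.1, t.2⟩
    rw [Rcard, Nat.card_of_isEmpty]
    norm_num

lemma Rcard_mul {m n : ℕ} (hm : m ≠ 0) (hn : n ≠ 0) (h : Nat.Coprime m n) (c : ℤ) :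
    Rcard (m * n) c = Rcard m c * Rcard n c := by
  haveI : NeZero m := ⟨hm⟩
  haveI : NeZero n := ⟨hn⟩
  haveI : NeZero (m * n) := ⟨mul_ne_zero hm hn⟩
  rw [Rcard, Rcard, Rcard, ← Nat.card_prod]
  apply Nat.card_congr
  let e := ZMod.chineseRemainder h
  refine (e.toEquiv.subtypeEquiv ?_).trans (Equiv.subtypeProdEquivProd)
  intro t
  rw [show (e.toEquiv t) = e t from rfl]
  constructor
  · intro ht
    constructor
    · have := congrArg (fun z => (e z).1) ht
      simpa [map_pow] using this
    · have := congrArg (fun z => (e z).2) ht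
      simpa [map_pow] using this
  · intro ⟨h1, h2⟩
    apply e.injective
    rw [map_pow]
    apply Prod.ext
    · simpa using h1
    · simpa using h2

lemma gcd_one_of_dvd {c : ℤ} {a b : ℕ} (h : Int.gcd c (a : ℤ) = 1) (hba : b ∣ a) :
    Int.gcd c (b : ℤ) = 1 := by
  have h1 : (Int.gcd c (b : ℤ) : ℤ) ∣ Int.gcd c (a : ℤ) := by
    apply Int.dvd_coe_gcd (Int.gcd_dvd_left _ _)
    exact dvd_trans (Int.gcd_dvd_right _ _) (Int.natCast_dvd_natCast.mpr hba)
  rw [h] at h1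
  exact Nat.eq_one_of_dvd_one (by exact_mod_cast h1)

lemma odd_of_dvd {a b : ℕ} (h : a ∣ b) (hb : Odd b) : Odd a := by
  rw [← Nat.not_even_iff_odd] at hb ⊢
  intro ha
  obtain ⟨e, he⟩ := h
  exact hb (he ▸ ha.mul_right e)

lemma Rcard_le_tau (m : ℕ) (hm : 0 < m) (hodd : Odd m) (c : ℤ) (hc : Int.gcd c (m : ℤ) = 1) :
    Rcard m c ≤ m.divisors.card := by
  induction m using Nat.strong_induction_on with
  | _ m ih =>
  by_cases h1 : m = 1
  · subst h1
    have : Rcard 1 c ≤ Nat.card (ZMod 1) :=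
      Nat.card_le_card_of_injective Subtype.val (Subtype.val_injective)
    simpa [Nat.card_eq_fintype_card] using this
  · set p := m.minFac with hpdef
    have hp : p.Prime := Nat.minFac_prime h1
    set k := m.factorization p with hkdef
    set m2 := m / p ^ k with hm2def
    have hmk : p ^ k * m2 = m := Nat.ordProj_mul_ordCompl_eq_self m p
    have hm2pos : 0 < m2 := Nat.ordCompl_pos p hm.ne'
    have hk1 : 1 ≤ k := hp.factorization_pos_of_dvd hm.ne' (Nat.minFac_dvd m)
    have hppos : 1 < p ^ k := by
      have := hp.two_le
      calc 1 < 2 := one_lt_two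
      _ ≤ p := this
      _ ≤ p ^ k := Nat.le_self_pow (by omega) p
    have hm2lt : m2 < m := by
      rw [← hmk]
      calc m2 = 1 * m2 := (one_mul m2).symm
      _ < p ^ k * m2 := (Nat.mul_lt_mul_right hm2pos).mpr hppos
    have hcop : Nat.Coprime (p ^ k) m2 := (Nat.coprime_ordCompl hp hm.ne').pow_left k
    have hpk_dvd : p ^ k ∣ m := Nat.ordProj_dvd m p
    have hm2_dvd : m2 ∣ m := Nat.ordCompl_dvd m p
    have hp2 : p ≠ 2 := by
      intro hp2
      rw [← Nat.not_even_iff_odd] at hodd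
      exact hodd ((even_iff_two_dvd).mpr (hp2 ▸ Nat.minFac_dvd m))
    have hrw : Rcard m c = Rcard (p ^ k) c * Rcard m2 c := by
      conv_lhs => rw [← hmk]
      exact Rcard_mul (by positivity) hm2pos.ne' hcop c
    have hb1 : Rcard (p ^ k) c ≤ 2 :=
      Rcard_pp hp hp2 k (gcd_one_of_dvd hc hpk_dvd)
    have hb2 : Rcard m2 c ≤ m2.divisors.card :=
      ih m2 hm2lt hm2pos (odd_of_dvd hm2_dvd hodd) (gcd_one_of_dvd hc hm2_dvd)
    have htau : m.divisors.card = (k + 1) * m2.divisors.card := by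
      conv_lhs => rw [← hmk]
      rw [hcop.card_divisors_mul]
      congr 1
      rw [Nat.divisors_prime_pow hp, Finset.card_map, Finset.card_range]
    rw [hrw, htau]
    have h2k : 2 ≤ k + 1 := by omega
    calc Rcard (p ^ k) c * Rcard m2 c ≤ 2 * m2.divisors.card :=
      Nat.mul_le_mul hb1 hb2
    _ ≤ (k + 1) * m2.divisors.card := Nat.mul_le_mul_right _ h2k

set_option maxHeartbeats 1000000 in
lemma main_count (d : ℕ) (hd : 0 < d) (hodd : Odd d) (α : ℤ) (hα : Int.gcd α d = 1) :
    Nat.card {b : ZMod d × ZMod d // b.1 ^ 2 + (α : ZMod d) * b.2 ^ 2 = 0}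
      ≤ d * d.divisors.card ^ 2 := by
  haveI : NeZero d := ⟨hd.ne'⟩
  set c : ℤ := -α with hcdef
  have hc : Int.gcd c (d : ℤ) = 1 := by rw [hcdef, Int.neg_gcd]; exact hα
  rw [Nat.card_eq_fintype_card, Fintype.card_subtype]
  set P : ZMod d × ZMod d → Prop := fun b => b.1 ^ 2 + (α : ZMod d) * b.2 ^ 2 = 0 with hPdef
  set G : ZMod d × ZMod d → ℕ := fun b => Nat.gcd (Nat.gcd b.1.val b.2.val) d with hGdef
  have hGmem : ∀ b ∈ Finset.univ.filter P, G b ∈ d.divisors := fun b _ =>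
    Nat.mem_divisors.mpr ⟨Nat.gcd_dvd_right _ _, hd.ne'⟩
  rw [Finset.card_eq_sum_card_fiberwise hGmem]
  have hfiber : ∀ g ∈ d.divisors,
      ((Finset.univ.filter P).filter fun b => G b = g).card ≤ d.divisors.card * d := by
    intro g hgmem
    obtain ⟨hg, -⟩ := Nat.mem_divisors.mp hgmem
    have hgpos : 0 < g := Nat.pos_of_mem_divisors hgmem
    set e := Nat.gcd d (g * g) with hedef
    set m := d / e with hmdef
    have hed : e ∣ d := Nat.gcd_dvd_left _ _
    have hepos : 0 < e := Nat.gcd_pos_of_pos_left _ hd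
    have hmd : m ∣ d := Nat.div_dvd_of_dvd hed
    have hmpos : 0 < m := Nat.div_pos (Nat.le_of_dvd hd hed) hepos
    haveI : NeZero m := ⟨hmpos.ne'⟩
    have hge : g ∣ e := Nat.dvd_gcd hg (dvd_mul_right g g)
    have heg : e ∣ g * g := Nat.gcd_dvd_right _ _
    have hde : e * m = d := Nat.mul_div_cancel' hed
    have hdg : (e / g) * m = d / g := by
      have h5 : d = g * ((e / g) * m) := by
        rw [← mul_assoc, Nat.mul_div_cancel' hge, hde]
      rw [h5, Nat.mul_div_cancel_left _ hgpos]
    have hegle : e / g ≤ g := by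
      have : e ≤ g * g := Nat.le_of_dvd (by positivity) heg
      calc e / g ≤ (g * g) / g := Nat.div_le_div_right this
        _ = g := Nat.mul_div_cancel_left g hgpos
    have hmodd : Odd m := odd_of_dvd hmd hodd
    have hcm : Int.gcd c (m : ℤ) = 1 := gcd_one_of_dvd hc hmd
    -- the injection
    set Φ : ZMod d × ZMod d → ZMod m × (ℕ × ℕ) := fun b =>
      (((b.1.val / g : ℕ) : ZMod m) * ((b.2.val / g : ℕ) : ZMod m)⁻¹,
        (b.2.val / g, (b.1.val / g) / m)) with hΦdef
    set T : Finset (ZMod m × (ℕ × ℕ)) :=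
      (Finset.univ.filter fun t : ZMod m => t ^ 2 = (c : ZMod m)) ×ˢ
        (Finset.range (d / g) ×ˢ Finset.range g) with hTdef
    -- facts about members of the fiber
    have hkey : ∀ b : ZMod d × ZMod d, b ∈ (Finset.univ.filter P).filter (fun b => G b = g) →
        (g ∣ b.1.val ∧ g ∣ b.2.val) ∧
        ((m : ℤ) ∣ ((b.1.val / g : ℕ) : ℤ) ^ 2 + α * ((b.2.val / g : ℕ) : ℤ) ^ 2 ∧
          IsUnit ((b.2.val / g : ℕ) : ZMod m)) := by
      intro b hb
      rw [Finset.mem_filter, Finset.mem_filter] at hb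
      obtain ⟨⟨-, hP⟩, hG⟩ := hb
      set X := b.1.val with hXdef
      set Y := b.2.val with hYdef
      have hgXY : g ∣ Nat.gcd X Y := hG ▸ Nat.gcd_dvd_left _ _
      have hgX : g ∣ X := hgXY.trans (Nat.gcd_dvd_left X Y)
      have hgY : g ∣ Y := hgXY.trans (Nat.gcd_dvd_right X Y)
      set x0 := X / g with hx0def
      set y0 := Y / g with hy0def
      have hXx : X = g * x0 := (Nat.mul_div_cancel' hgX).symm
      have hYy : Y = g * y0 := (Nat.mul_div_cancel' hgY).symm
      have hdvd_d : (d : ℤ) ∣ (X : ℤ) ^ 2 + α * (Y : ℤ) ^ 2 := by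
        rw [← ZMod.intCast_zmod_eq_zero_iff_dvd]
        rw [hXdef, hYdef]
        push_cast [ZMod.natCast_val, ZMod.cast_id]
        exact hP
      have hm_dvd : (m : ℤ) ∣ ((x0 : ℕ) : ℤ) ^ 2 + α * ((y0 : ℕ) : ℤ) ^ 2 := by
        set h := (g * g) / e with hhdef
        have heh : e * h = g * g := Nat.mul_div_cancel' heg
        have hcop : Nat.Coprime m h := by
          rw [hmdef, hhdef, hedef]
          exact Nat.coprime_div_gcd_div_gcd (Nat.gcd_pos_of_pos_left _ hd)
        have h6 : (d : ℤ) ∣ (e : ℤ) * h * (((x0 : ℕ) : ℤ) ^ 2 + α * ((y0 : ℕ) : ℤ) ^ 2) := by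
          have h7 : (X : ℤ) ^ 2 + α * (Y : ℤ) ^ 2
              = (g : ℤ) * g * (((x0 : ℕ) : ℤ) ^ 2 + α * ((y0 : ℕ) : ℤ) ^ 2) := by
            have : (X : ℤ) = (g : ℤ) * (x0 : ℕ) := by exact_mod_cast congrArg (Nat.cast : ℕ → ℤ) hXx
            have hY' : (Y : ℤ) = (g : ℤ) * (y0 : ℕ) := by exact_mod_cast congrArg (Nat.cast : ℕ → ℤ) hYy
            rw [this, hY']
            ring
          have h8 : ((e : ℤ) * h) = (g : ℤ) * g := by exact_mod_cast congrArg (Nat.cast : ℕ → ℤ) heh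
          rw [← h8] at h7
          rw [← h7]
          exact hdvd_d
        have h9 : (m : ℤ) ∣ (h : ℤ) * (((x0 : ℕ) : ℤ) ^ 2 + α * ((y0 : ℕ) : ℤ) ^ 2) := by
          have hde' : (e : ℤ) * m = d := by exact_mod_cast congrArg (Nat.cast : ℕ → ℤ) hde
          rw [← hde', mul_assoc] at h6
          exact (mul_dvd_mul_iff_left (by exact_mod_cast hepos.ne' : (e : ℤ) ≠ 0)).mp h6
        have h10 : IsCoprime (m : ℤ) (h : ℤ) := by
          rw [Int.isCoprime_iff_gcd_eq_one, Int.gcd_natCast_natCast]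
          exact hcop
        exact h10.dvd_of_dvd_mul_left h9
      refine ⟨⟨hgX, hgY⟩, hm_dvd, ?_⟩
      rw [ZMod.isUnit_iff_coprime]
      by_contra hne
      set q := (Nat.gcd y0 m).minFac with hqdef
      have hq : q.Prime := Nat.minFac_prime hne
      have hqy : q ∣ y0 := (Nat.minFac_dvd _).trans (Nat.gcd_dvd_left _ _)
      have hqm : q ∣ m := (Nat.minFac_dvd _).trans (Nat.gcd_dvd_right _ _)
      have hqx : q ∣ x0 := by
        have hqx2 : (q : ℤ) ∣ ((x0 : ℕ) : ℤ) ^ 2 := by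
          have h11 : ((x0 : ℕ) : ℤ) ^ 2
              = (((x0 : ℕ) : ℤ) ^ 2 + α * ((y0 : ℕ) : ℤ) ^ 2) - α * ((y0 : ℕ) : ℤ) ^ 2 := by ring
          rw [h11]
          apply dvd_sub
          · exact dvd_trans (Int.natCast_dvd_natCast.mpr hqm) hm_dvd
          · exact Dvd.dvd.mul_left (by
              have : (q : ℤ) ∣ ((y0 : ℕ) : ℤ) := Int.natCast_dvd_natCast.mpr hqy
              exact this.trans (dvd_pow_self _ two_ne_zero)) α
        have := (Nat.prime_iff_prime_int.mp hq).dvd_of_dvd_pow hqx2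
        exact_mod_cast this
      have hqgd : q * g ∣ d := by
        have h12 : q ∣ d / g := hqm.trans ⟨e / g, by rw [← hdg]; ring⟩
        have h13 : q * g ∣ (d / g) * g := mul_dvd_mul_right h12 g
        rwa [Nat.div_mul_cancel hg] at h13
      have hqgX : q * g ∣ X := by
        obtain ⟨x1, hx1⟩ := hqx
        exact ⟨x1, by rw [hXx, hx1]; ring⟩
      have hqgY : q * g ∣ Y := by
        obtain ⟨y1, hy1⟩ := hqy
        exact ⟨y1, by rw [hYy, hy1]; ring⟩
      have h14 : q * g ∣ G b := Nat.dvd_gcd (Nat.dvd_gcd hqgX hqgY) hqgd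
      rw [hG] at h14
      have := Nat.le_of_dvd hgpos h14
      nlinarith [hq.two_le]
    -- membership
    have hmaps : ∀ b ∈ (Finset.univ.filter P).filter (fun b => G b = g), Φ b ∈ T := by
      intro b hb
      obtain ⟨⟨hgX, hgY⟩, hm_dvd, hyunit⟩ := hkey b hb
      rw [hTdef, Finset.mem_product, Finset.mem_product]
      refine ⟨?_, ?_, ?_⟩
      · rw [Finset.mem_filter]
        refine ⟨Finset.mem_univ _, ?_⟩
        have h0 : (((b.1.val / g : ℕ) : ZMod m)) ^ 2 = - (α : ZMod m) * ((b.2.val / g : ℕ) : ZMod m) ^ 2 := by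
          have h0' := (ZMod.intCast_zmod_eq_zero_iff_dvd _ m).mpr hm_dvd
          simp only [Int.cast_add, Int.cast_mul, Int.cast_pow, Int.cast_natCast] at h0'
          linear_combination h0'
        have hyy : ((b.2.val / g : ℕ) : ZMod m) * ((b.2.val / g : ℕ) : ZMod m)⁻¹ = 1 :=
          ZMod.mul_inv_of_unit _ hyunit
        show (((b.1.val / g : ℕ) : ZMod m) * ((b.2.val / g : ℕ) : ZMod m)⁻¹) ^ 2 = (c : ZMod m)
        have hccast : ((c : ℤ) : ZMod m) = - (α : ZMod m) := by rw [hcdef]; push_cast; ring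
        rw [hccast]
        calc (((b.1.val / g : ℕ) : ZMod m) * ((b.2.val / g : ℕ) : ZMod m)⁻¹) ^ 2
            = ((b.1.val / g : ℕ) : ZMod m) ^ 2 * (((b.2.val / g : ℕ) : ZMod m)⁻¹) ^ 2 := by ring
          _ = - (α : ZMod m) * (((b.2.val / g : ℕ) : ZMod m) * ((b.2.val / g : ℕ) : ZMod m)⁻¹) ^ 2 := by
              rw [h0]; ring
          _ = - (α : ZMod m) := by rw [hyy]; ring
      · rw [Finset.mem_range]
        exact Nat.div_lt_div_of_lt_of_dvd hg (ZMod.val_lt b.2)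
      · rw [Finset.mem_range]
        have hx0lt : b.1.val / g < d / g := Nat.div_lt_div_of_lt_of_dvd hg (ZMod.val_lt b.1)
        rw [← hdg] at hx0lt
        have : (b.1.val / g) / m < e / g := by
          rw [Nat.div_lt_iff_lt_mul hmpos]
          exact hx0lt
        exact lt_of_lt_of_le this hegle
    -- injectivity
    have hinj : Set.InjOn Φ ((Finset.univ.filter P).filter (fun b => G b = g)) := by
      intro b hb b' hb' heq
      have hk := hkey b hb
      have hk' := hkey b' hb'
      obtain ⟨⟨hgX, hgY⟩, hm_dvd, hyunit⟩ := hk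
      obtain ⟨⟨hgX', hgY'⟩, hm_dvd', hyunit'⟩ := hk'
      rw [hΦdef, Prod.ext_iff, Prod.ext_iff] at heq
      obtain ⟨ht, hy, hj⟩ := heq
      simp only at ht hy hj
      have hY : b.2.val = b'.2.val := by
        rw [← Nat.mul_div_cancel' hgY, ← Nat.mul_div_cancel' hgY', hy]
      have hx0 : ((b.1.val / g : ℕ) : ZMod m) = ((b'.1.val / g : ℕ) : ZMod m) := by
        have h1 := congrArg (fun z => z * ((b.2.val / g : ℕ) : ZMod m)) ht
        have e1 : ((b.1.val / g : ℕ) : ZMod m) * ((b.2.val / g : ℕ) : ZMod m)⁻¹ *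
            ((b.2.val / g : ℕ) : ZMod m) = ((b.1.val / g : ℕ) : ZMod m) := by
          rw [mul_assoc, ZMod.inv_mul_of_unit _ hyunit, mul_one]
        have e2 : ((b'.1.val / g : ℕ) : ZMod m) * ((b'.2.val / g : ℕ) : ZMod m)⁻¹ *
            ((b.2.val / g : ℕ) : ZMod m) = ((b'.1.val / g : ℕ) : ZMod m) := by
          rw [hy, mul_assoc, ZMod.inv_mul_of_unit _ hyunit', mul_one]
        rw [e1, e2] at h1
        exact h1
      have hmod : (b.1.val / g) % m = (b'.1.val / g) % m :=
        (ZMod.natCast_eq_natCast_iff' _ _ _).mp hx0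
      have hX : b.1.val = b'.1.val := by
        have d1 := Nat.div_add_mod (b.1.val / g) m
        have d2 := Nat.div_add_mod (b'.1.val / g) m
        have : b.1.val / g = b'.1.val / g := by
          conv_lhs => rw [← Nat.div_add_mod (b.1.val / g) m]
          conv_rhs => rw [← Nat.div_add_mod (b'.1.val / g) m]
          rw [hj, hmod]
        rw [← Nat.mul_div_cancel' hgX, ← Nat.mul_div_cancel' hgX', this]
      have hb1 : b.1 = b'.1 := ZMod.val_injective d hX
      have hb2 : b.2 = b'.2 := ZMod.val_injective d hY
      exact Prod.ext hb1 hb2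
    have hcard := Finset.card_le_card_of_injOn Φ hmaps hinj
    have hTcard : T.card ≤ d.divisors.card * d := by
      rw [hTdef, Finset.card_product, Finset.card_product, Finset.card_range, Finset.card_range]
      have hR : (Finset.univ.filter fun t : ZMod m => t ^ 2 = (c : ZMod m)).card = Rcard m c := by
        rw [Rcard, Nat.card_eq_fintype_card, Fintype.card_subtype]
      have hRle : (Finset.univ.filter fun t : ZMod m => t ^ 2 = (c : ZMod m)).card ≤ d.divisors.card := by
        rw [hR]
        calc Rcard m c ≤ m.divisors.card := Rcard_le_tau m hmpos hmodd c hcm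
          _ ≤ d.divisors.card := Finset.card_le_card (Nat.divisors_subset_of_dvd hd.ne' hmd)
      calc _ ≤ d.divisors.card * (d / g * g) := Nat.mul_le_mul hRle (le_refl _)
        _ = d.divisors.card * d := by rw [Nat.div_mul_cancel hg]
    exact hcard.trans hTcard
  calc ∑ g ∈ d.divisors, ((Finset.univ.filter P).filter fun b => G b = g).card
      ≤ d.divisors.card * (d.divisors.card * d) := by
        apply Finset.sum_le_card_nsmul _ _ _ hfiber
    _ = d * d.divisors.card ^ 2 := by ring

theorem stmt_11 :
    ∀ ε : ℝ, 0 < ε → ∃ C : ℝ, 0 < C ∧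
      ∀ (d : ℕ) (α : ℤ), 0 < d → Odd d → Int.gcd α d = 1 →
        (Nat.card {b : ZMod d × ZMod d //
            b.1 ^ 2 + (α : ZMod d) * b.2 ^ 2 = 0} : ℝ)
          ≤ C * (d : ℝ) ^ ((1 : ℝ) + ε) := by
  intro ε hε
  obtain ⟨C₁, hC₁, hτ⟩ := tau_bound (ε / 2) (by linarith)
  refine ⟨C₁ ^ 2, by positivity, ?_⟩
  intro d α hd hodd hα
  have hcount := main_count d hd hodd α hα
  have hd0 : (0 : ℝ) < (d : ℝ) := by exact_mod_cast hd
  have h1 : (Nat.card {b : ZMod d × ZMod d //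
      b.1 ^ 2 + (α : ZMod d) * b.2 ^ 2 = 0} : ℝ) ≤ (d : ℝ) * (d.divisors.card : ℝ) ^ 2 := by
    calc (Nat.card {b : ZMod d × ZMod d //
        b.1 ^ 2 + (α : ZMod d) * b.2 ^ 2 = 0} : ℝ) ≤ ((d * d.divisors.card ^ 2 : ℕ) : ℝ) := by
          exact_mod_cast hcount
      _ = (d : ℝ) * (d.divisors.card : ℝ) ^ 2 := by push_cast; ring
  have h2 : (d.divisors.card : ℝ) ≤ C₁ * (d : ℝ) ^ (ε / 2) := hτ d hd
  have h3 : (d.divisors.card : ℝ) ^ 2 ≤ (C₁ * (d : ℝ) ^ (ε / 2)) ^ 2 := by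
    exact pow_le_pow_left₀ (Nat.cast_nonneg _) h2 2
  have h4 : ((d : ℝ) ^ (ε / 2)) ^ 2 = (d : ℝ) ^ ε := by
    rw [← Real.rpow_natCast ((d:ℝ) ^ (ε/2)) 2, ← Real.rpow_mul hd0.le]
    norm_num
  have h5 : (d : ℝ) ^ ((1:ℝ) + ε) = (d : ℝ) * (d : ℝ) ^ ε := by
    rw [Real.rpow_add hd0, Real.rpow_one]
  calc (Nat.card {b : ZMod d × ZMod d //
      b.1 ^ 2 + (α : ZMod d) * b.2 ^ 2 = 0} : ℝ)
      ≤ (d : ℝ) * (d.divisors.card : ℝ) ^ 2 := h1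
    _ ≤ (d : ℝ) * (C₁ * (d : ℝ) ^ (ε / 2)) ^ 2 := by
        exact mul_le_mul_of_nonneg_left h3 hd0.le
    _ = C₁ ^ 2 * ((d : ℝ) * ((d : ℝ) ^ (ε/2)) ^ 2) := by ring
    _ = C₁ ^ 2 * (d : ℝ) ^ ((1:ℝ) + ε) := by rw [h4, h5]
end

section
/- Let q, r be positive integers with gcd conditions: suppose α₁, α₂, α₃ are integers coprime to q, and write rα_i/q = a_i + β_i with a_i ∈ ℤ and |β_i| = ||rα_i/q|| ≤ 1/2 for i = 1, 2, 3. If (x₁, x₂, x₃) ∈ ℤ³ satisfies α₁x₁² + α₂x₂² + α₃x₃² ≡ 0 (mod q), then β₁qx₁² + β₂qx₂² + β₃qx₃² ≡ 0 (mod q) where each β_i q is an integer. Moreover, if additionally max{|x₁|,|x₂|,|x₃|} ≤ N, max{|β₁|,|β₂|,|β₃|} < 1/(3N²), and β₁, β₂, β₃ all have the same sign with β_i ≠ 0, then x₁ = x₂ = x₃ = 0. -/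
set_option maxHeartbeats 1000000


theorem stmt_17 (q r N : ℕ) (hq : 0 < q) (hr : 0 < r) (hN : 0 < N)
    (α₁ α₂ α₃ : ℤ) (hα₁ : Int.gcd α₁ q = 1) (hα₂ : Int.gcd α₂ q = 1)
    (hα₃ : Int.gcd α₃ q = 1)
    (a₁ a₂ a₃ : ℤ) (β₁ β₂ β₃ : ℝ)
    (hβ₁ : ((r : ℝ) * α₁) / q = a₁ + β₁) (hβ₂ : ((r : ℝ) * α₂) / q = a₂ + β₂)
    (hβ₃ : ((r : ℝ) * α₃) / q = a₃ + β₃)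
    (hb₁ : |β₁| ≤ 1 / 2) (hb₂ : |β₂| ≤ 1 / 2) (hb₃ : |β₃| ≤ 1 / 2)
    (x₁ x₂ x₃ : ℤ)
    (hcong : (q : ℤ) ∣ α₁ * x₁ ^ 2 + α₂ * x₂ ^ 2 + α₃ * x₃ ^ 2) :
    ((q : ℤ) ∣ ((r : ℤ) * α₁ - a₁ * q) * x₁ ^ 2 + ((r : ℤ) * α₂ - a₂ * q) * x₂ ^ 2
        + ((r : ℤ) * α₃ - a₃ * q) * x₃ ^ 2) ∧
    (|x₁| ≤ (N : ℤ) → |x₂| ≤ (N : ℤ) → |x₃| ≤ (N : ℤ) →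
      max (|β₁|) (max (|β₂|) (|β₃|)) < 1 / (3 * (N : ℝ) ^ 2) →
      β₁ ≠ 0 → β₂ ≠ 0 → β₃ ≠ 0 →
      ((0 < β₁ ∧ 0 < β₂ ∧ 0 < β₃) ∨ (β₁ < 0 ∧ β₂ < 0 ∧ β₃ < 0)) →
      x₁ = 0 ∧ x₂ = 0 ∧ x₃ = 0) := by
  have hq0 : (q : ℝ) ≠ 0 := Nat.cast_ne_zero.mpr hq.ne'
  have hqpos : (0 : ℝ) < q := by positivity
  have e1 : (r : ℝ) * α₁ - a₁ * q = β₁ * q := by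
    field_simp at hβ₁; linarith
  have e2 : (r : ℝ) * α₂ - a₂ * q = β₂ * q := by
    field_simp at hβ₂; linarith
  have e3 : (r : ℝ) * α₃ - a₃ * q = β₃ * q := by
    field_simp at hβ₃; linarith
  set S : ℤ := ((r : ℤ) * α₁ - a₁ * q) * x₁ ^ 2 + ((r : ℤ) * α₂ - a₂ * q) * x₂ ^ 2
      + ((r : ℤ) * α₃ - a₃ * q) * x₃ ^ 2 with hS
  have hdvd : (q : ℤ) ∣ S := by
    have : S = (r : ℤ) * (α₁ * x₁ ^ 2 + α₂ * x₂ ^ 2 + α₃ * x₃ ^ 2)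
        - (a₁ * x₁ ^ 2 + a₂ * x₂ ^ 2 + a₃ * x₃ ^ 2) * q := by rw [hS]; ring
    rw [this]
    exact dvd_sub (hcong.mul_left _) (dvd_mul_left _ _)
  refine ⟨hdvd, ?_⟩
  intro h1 h2 h3 hmax hn1 hn2 hn3 hsign
  have hSr : (S : ℝ) = (β₁ * (x₁ : ℝ) ^ 2 + β₂ * (x₂ : ℝ) ^ 2 + β₃ * (x₃ : ℝ) ^ 2) * q := by
    push_cast [hS]
    linear_combination ((x₁ : ℝ) ^ 2) * e1 + ((x₂ : ℝ) ^ 2) * e2 + ((x₃ : ℝ) ^ 2) * e3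
  -- bounds
  have hNpos : (0 : ℝ) < (N : ℝ) ^ 2 := by positivity
  have hx1 : (x₁ : ℝ) ^ 2 ≤ (N : ℝ) ^ 2 := by
    have : |(x₁ : ℝ)| ≤ (N : ℝ) := by exact_mod_cast h1
    nlinarith [abs_nonneg (x₁ : ℝ), sq_abs (x₁ : ℝ)]
  have hx2 : (x₂ : ℝ) ^ 2 ≤ (N : ℝ) ^ 2 := by
    have : |(x₂ : ℝ)| ≤ (N : ℝ) := by exact_mod_cast h2
    nlinarith [abs_nonneg (x₂ : ℝ), sq_abs (x₂ : ℝ)]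
  have hx3 : (x₃ : ℝ) ^ 2 ≤ (N : ℝ) ^ 2 := by
    have : |(x₃ : ℝ)| ≤ (N : ℝ) := by exact_mod_cast h3
    nlinarith [abs_nonneg (x₃ : ℝ), sq_abs (x₃ : ℝ)]
  simp only [max_lt_iff] at hmax
  obtain ⟨hm1, hm2, hm3⟩ := hmax
  have hTbound : |β₁ * (x₁ : ℝ) ^ 2 + β₂ * (x₂ : ℝ) ^ 2 + β₃ * (x₃ : ℝ) ^ 2| < 1 := by
    have key : ∀ (β : ℝ) (x : ℝ), |β| < 1 / (3 * (N : ℝ) ^ 2) → x ^ 2 ≤ (N : ℝ) ^ 2 →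
        |β * x ^ 2| < 1 / 3 := by
      intro β x hb hx
      rw [abs_mul, abs_pow, sq_abs]
      have h13 : |β| * (N : ℝ) ^ 2 < 1 / 3 := by
        have := mul_lt_mul_of_pos_right hb hNpos
        rw [div_mul_eq_mul_div, one_mul] at this
        calc |β| * (N : ℝ) ^ 2 < (N : ℝ) ^ 2 / (3 * (N : ℝ) ^ 2) := this
          _ = 1 / 3 := by field_simp
      calc |β| * x ^ 2 ≤ |β| * (N : ℝ) ^ 2 :=
            mul_le_mul_of_nonneg_left hx (abs_nonneg β)
        _ < 1 / 3 := h13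
    have k1 := key β₁ x₁ hm1 hx1
    have k2 := key β₂ x₂ hm2 hx2
    have k3 := key β₃ x₃ hm3 hx3
    calc |β₁ * (x₁ : ℝ) ^ 2 + β₂ * (x₂ : ℝ) ^ 2 + β₃ * (x₃ : ℝ) ^ 2|
        ≤ |β₁ * (x₁ : ℝ) ^ 2| + |β₂ * (x₂ : ℝ) ^ 2| + |β₃ * (x₃ : ℝ) ^ 2| := by
          exact abs_add_three _ _ _
      _ < 1 := by linarith
  have hSabs : |(S : ℝ)| < (q : ℝ) := by
    rw [hSr, abs_mul, abs_of_pos hqpos]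
    nlinarith [hTbound, abs_nonneg (β₁ * (x₁ : ℝ) ^ 2 + β₂ * (x₂ : ℝ) ^ 2 + β₃ * (x₃ : ℝ) ^ 2)]
  have hS0 : S = 0 := by
    refine Int.eq_zero_of_abs_lt_dvd hdvd ?_
    exact_mod_cast (by push_cast; exact hSabs : |(S : ℝ)| < ((q : ℤ) : ℝ))
  have hT0 : β₁ * (x₁ : ℝ) ^ 2 + β₂ * (x₂ : ℝ) ^ 2 + β₃ * (x₃ : ℝ) ^ 2 = 0 := by
    have : (S : ℝ) = 0 := by exact_mod_cast hS0
    rw [hSr] at this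
    exact (mul_eq_zero.mp this).resolve_right hq0
  have sq1 : (0 : ℝ) ≤ (x₁ : ℝ) ^ 2 := sq_nonneg _
  have sq2 : (0 : ℝ) ≤ (x₂ : ℝ) ^ 2 := sq_nonneg _
  have sq3 : (0 : ℝ) ≤ (x₃ : ℝ) ^ 2 := sq_nonneg _
  have final : (x₁ : ℝ) ^ 2 = 0 ∧ (x₂ : ℝ) ^ 2 = 0 ∧ (x₃ : ℝ) ^ 2 = 0 := by
    have key : β₁ * (x₁ : ℝ) ^ 2 = 0 ∧ β₂ * (x₂ : ℝ) ^ 2 = 0 ∧ β₃ * (x₃ : ℝ) ^ 2 = 0 := by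
      rcases hsign with ⟨p1, p2, p3⟩ | ⟨p1, p2, p3⟩
      · have t1 := mul_nonneg p1.le sq1
        have t2 := mul_nonneg p2.le sq2
        have t3 := mul_nonneg p3.le sq3
        exact ⟨by linarith, by linarith, by linarith⟩
      · have t1 := mul_nonpos_of_nonpos_of_nonneg p1.le sq1
        have t2 := mul_nonpos_of_nonpos_of_nonneg p2.le sq2
        have t3 := mul_nonpos_of_nonpos_of_nonneg p3.le sq3
        exact ⟨by linarith, by linarith, by linarith⟩
    obtain ⟨k1, k2, k3⟩ := key
    exact ⟨(mul_eq_zero.mp k1).resolve_left hn1, (mul_eq_zero.mp k2).resolve_left hn2,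
      (mul_eq_zero.mp k3).resolve_left hn3⟩
  obtain ⟨f1, f2, f3⟩ := final
  refine ⟨?_, ?_, ?_⟩ <;>
    [ (have := pow_eq_zero_iff (n := 2) (by norm_num) |>.mp f1; exact_mod_cast this);
      (have := pow_eq_zero_iff (n := 2) (by norm_num) |>.mp f2; exact_mod_cast this);
      (have := pow_eq_zero_iff (n := 2) (by norm_num) |>.mp f3; exact_mod_cast this)]
end
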